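/- (Theorem B, part (i): explicit criterion for steepness on one-dimensional subspaces.) Let r ≥ 2 and n ≥ 2 be integers, s₁ ∈ {1,…,r−1}, I₀ ∈ ℝⁿ and ϱ > 0. Let h be of class C^{2r−1} on the closed ball B̄(I₀,ϱ) with ‖h‖_{C^{2r−1}(B̄(I₀,ϱ))} < ∞ and ∇h(I₀) ≠ 0. Assume that there is no unit vector w ∈ ℝⁿ satisfying h¹_{I₀}[w] = h²_{I₀}[w,w] = ⋯ = h^{s₁+1}_{I₀}[w,…,w] = 0. Then there exist R > 0, C₁ > 0 and δ > 0 such that ∇h(I) ≠ 0 for every I ∈ B(I₀,R), and for every I ∈ B(I₀,R) and every one-dimensional linear subspace Γ ⊆ ℝⁿ orthogonal to ∇h(I), the steepness inequality holds at I on Γ with coefficients C₁, δ and index s₁. -/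

import Mathlib

open Metric Set
open scoped RealInnerProductSpace

noncomputable section

/-- The steepness inequality at `I` on `Γ` with coefficients `C, δ` and index `α`:
for every `ξ ∈ (0,δ]`,
`max_{η∈[0,ξ]} min_{u∈Γ, ‖u‖=η} ‖π_Γ ∇f(I+u)‖ > C ξ^α`,
where `π_Γ` is the orthogonal projection onto `Γ`. -/
def SteepAt {n : ℕ} (f : EuclideanSpace ℝ (Fin n) → ℝ) (I : EuclideanSpace ℝ (Fin n))
    (Γ : Submodule ℝ (EuclideanSpace ℝ (Fin n))) (C δ α : ℝ) : Prop :=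
  ∀ ξ ∈ Set.Ioc (0:ℝ) δ, ∃ η ∈ Set.Icc (0:ℝ) ξ, ∀ u ∈ Γ, ‖u‖ = η →
    C * ξ ^ α < ‖(Submodule.orthogonalProjectionOnto Γ (gradient f (I + u)) : EuclideanSpace ℝ (Fin n))‖

/-- `‖f‖_{C^q(D)} ≤ M`, formulated with iterated Fréchet derivatives. -/
def CqNormLe {n : ℕ} (q : ℕ) (f : EuclideanSpace ℝ (Fin n) → ℝ)
    (D : Set (EuclideanSpace ℝ (Fin n))) (M : ℝ) : Prop :=
  ∀ k ≤ q, ∀ x ∈ D, ‖iteratedFDerivWithin ℝ k f D x‖ ≤ M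



/-- Two-sided polynomial lower bound. -/
lemma exists_poly_kappa (s : ℕ) : ∃ κ > (0:ℝ), ∀ b : Fin (s+1) → ℝ, ∃ t ∈ Set.Icc (0:ℝ) 1,
    κ * ‖b‖ ≤ |∑ j : Fin (s+1), b j * t ^ (j:ℕ)| ∧
    κ * ‖b‖ ≤ |∑ j : Fin (s+1), b j * (-t) ^ (j:ℕ)| := by
  set p : (Fin (s+1) → ℝ) → ℝ → ℝ := fun b t => ∑ j : Fin (s+1), b j * t ^ (j:ℕ) with hp
  -- positivity on the sphere
  have hpos : ∀ b : Fin (s+1) → ℝ, b ≠ 0 → ∃ t ∈ Set.Icc (0:ℝ) 1,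
      0 < min |p b t| |p b (-t)| := by
    intro b hb
    by_contra hcon
    push_neg at hcon
    have hroot : ∀ t ∈ Set.Icc (0:ℝ) 1, p b t = 0 ∨ p b (-t) = 0 := by
      intro t ht
      have := hcon t ht
      rcases le_or_gt |p b t| |p b (-t)| with hle | hlt
      · left
        have : |p b t| ≤ 0 := by simpa [min_eq_left hle] using this
        exact abs_eq_zero.mp (le_antisymm this (abs_nonneg _))
      · right
        have : |p b (-t)| ≤ 0 := by simpa [min_eq_right hlt.le] using this
        exact abs_eq_zero.mp (le_antisymm this (abs_nonneg _))
    set P : Polynomial ℝ := ∑ j : Fin (s+1), Polynomial.C (b j) * Polynomial.X ^ (j:ℕ) with hP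
    have hPeval : ∀ t : ℝ, P.eval t = p b t := by
      intro t
      simp [hP, hp, Polynomial.eval_finset_sum]
    have hPinf : {x : ℝ | P.IsRoot x}.Infinite := by
      set Z := {x : ℝ | P.IsRoot x} with hZ
      have hsub : Set.Icc (0:ℝ) 1 ⊆ Z ∪ (fun x : ℝ => -x) ⁻¹' Z := by
        intro t ht
        rcases hroot t ht with h1 | h1
        · exact Or.inl (by simpa [hZ, Polynomial.IsRoot, hPeval] using h1)
        · exact Or.inr (by simpa [hZ, Polynomial.IsRoot, hPeval] using h1)
      by_contra hfin
      rw [Set.not_infinite] at hfin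
      have : (Z ∪ (fun x : ℝ => -x) ⁻¹' Z).Finite :=
        hfin.union (hfin.preimage (neg_injective.injOn))
      exact (Set.Icc_infinite (by norm_num : (0:ℝ) < 1)) (this.subset hsub)
    have hP0 : P = 0 := P.eq_zero_of_infinite_isRoot hPinf
    apply hb
    funext i
    have hcoeff : P.coeff (i:ℕ) = b i := by
      rw [hP, Polynomial.finset_sum_coeff]
      rw [Finset.sum_eq_single i]
      · simp
      · intro j _ hji
        have hne : (j:ℕ) ≠ (i:ℕ) := fun hh => hji (Fin.val_injective hh)
        simp [Polynomial.coeff_C_mul, Polynomial.coeff_X_pow, hne, Ne.symm hne]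
      · simp
    rw [hP0] at hcoeff
    simpa using hcoeff.symm
  -- continuity of b ↦ min |p b t| |p b (-t)|
  have hcont : ∀ t : ℝ, Continuous fun b : Fin (s+1) → ℝ => min |p b t| |p b (-t)| := by
    intro t
    have h1 : Continuous fun b : Fin (s+1) → ℝ => p b t := by
      simp only [hp]; fun_prop
    have h2 : Continuous fun b : Fin (s+1) → ℝ => p b (-t) := by
      simp only [hp]; fun_prop
    exact (h1.abs).min (h2.abs)
  -- covering of the sphere
  set S : Set (Fin (s+1) → ℝ) := sphere 0 1 with hS
  have hSne : S.Nonempty := NormedSpace.sphere_nonempty.mpr zero_le_one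
  have hchoice : ∀ b : Fin (s+1) → ℝ, ∃ tb : ℝ, b ∈ S →
      tb ∈ Set.Icc (0:ℝ) 1 ∧ 0 < min |p b tb| |p b (-tb)| := by
    intro b
    by_cases hb : b ∈ S
    · have hb0 : b ≠ 0 := by
        intro h0
        rw [hS, mem_sphere_iff_norm] at hb
        simp [h0] at hb
      obtain ⟨t, ht, hmin⟩ := hpos b hb0
      exact ⟨t, fun _ => ⟨ht, hmin⟩⟩
    · exact ⟨0, fun h => absurd h hb⟩
  choose τ hτ using hchoice
  set ε : (Fin (s+1) → ℝ) → ℝ := fun b => min |p b (τ b)| |p b (-(τ b))| / 2 with hε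
  have hUopen : ∀ b₀, IsOpen {b : Fin (s+1) → ℝ | ε b₀ < min |p b (τ b₀)| |p b (-(τ b₀))|} :=
    fun b₀ => isOpen_lt continuous_const (hcont (τ b₀))
  obtain ⟨T, hTS, hTcov⟩ := (isCompact_sphere (0 : Fin (s+1) → ℝ) 1).elim_nhds_subcover
    (fun b₀ => {b | ε b₀ < min |p b (τ b₀)| |p b (-(τ b₀))|})
    (fun b₀ hb₀ => (hUopen b₀).mem_nhds (by
      have := (hτ b₀ hb₀).2
      simp only [Set.mem_setOf_eq, hε]
      linarith))
  have hTne : T.Nonempty := by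
    rcases hSne with ⟨b, hb⟩
    rcases Set.mem_iUnion₂.mp (hTcov hb) with ⟨b₀, hb₀T, _⟩
    exact ⟨b₀, hb₀T⟩
  set κ := T.inf' hTne ε with hκ
  have hκpos : 0 < κ := by
    rw [hκ, Finset.lt_inf'_iff]
    intro b₀ hb₀
    have := (hτ b₀ (hTS b₀ hb₀)).2
    simp only [hε]
    linarith
  refine ⟨κ, hκpos, ?_⟩
  intro b
  by_cases hb0 : b = 0
  · exact ⟨0, by norm_num, by simp [hb0, hp]⟩
  · set b' := ‖b‖⁻¹ • b with hb'
    have hbn : ‖b‖ ≠ 0 := norm_ne_zero_iff.mpr hb0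
    have hb'S : b' ∈ S := by
      rw [hS, mem_sphere_iff_norm, sub_zero, hb', norm_smul]
      simp [abs_of_nonneg (inv_nonneg.mpr (norm_nonneg b)), inv_mul_cancel₀ hbn]
    rcases Set.mem_iUnion₂.mp (hTcov hb'S) with ⟨b₀, hb₀T, hb'mem⟩
    simp only [Set.mem_setOf_eq] at hb'mem
    have hκle : κ ≤ ε b₀ := Finset.inf'_le ε hb₀T
    have hpb' : ∀ t : ℝ, p b' t = ‖b‖⁻¹ * p b t := by
      intro t
      simp only [hp, hb', Pi.smul_apply, smul_eq_mul, Finset.mul_sum]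
      exact Finset.sum_congr rfl fun j _ => by ring
    refine ⟨τ b₀, (hτ b₀ (hTS b₀ hb₀T)).1, ?_, ?_⟩
    · have h1 : κ < |p b' (τ b₀)| := lt_of_le_of_lt hκle (lt_of_lt_of_le hb'mem (min_le_left _ _))
      rw [hpb', abs_mul, abs_of_nonneg (inv_nonneg.mpr (norm_nonneg b))] at h1
      calc κ * ‖b‖ ≤ ‖b‖⁻¹ * |p b (τ b₀)| * ‖b‖ := by
            apply mul_le_mul_of_nonneg_right h1.le (norm_nonneg b)
        _ = |p b (τ b₀)| := by field_simp
    · have h1 : κ < |p b' (-(τ b₀))| := lt_of_le_of_lt hκle (lt_of_lt_of_le hb'mem (min_le_right _ _))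
      rw [hpb', abs_mul, abs_of_nonneg (inv_nonneg.mpr (norm_nonneg b))] at h1
      calc κ * ‖b‖ ≤ ‖b‖⁻¹ * |p b (-(τ b₀))| * ‖b‖ := by
            apply mul_le_mul_of_nonneg_right h1.le (norm_nonneg b)
        _ = |p b (-(τ b₀))| := by field_simp


lemma jet_lower_bound {E : Type*} [NormedAddCommGroup E] [NormedSpace ℝ E]
    [FiniteDimensional ℝ E] [Nontrivial E]
    {h : E → ℝ} {U : Set E} (hU : IsOpen U) {I₀ : E} (hI₀ : I₀ ∈ U)
    {m : ℕ} (hreg : ContDiffOn ℝ m h U) {s : ℕ} (hsm : s + 1 ≤ m)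
    (hjet : ∀ w : E, ‖w‖ = 1 → ∃ k, 1 ≤ k ∧ k ≤ s + 1 ∧
      iteratedFDeriv ℝ k h I₀ (fun _ => w) ≠ 0) :
    ∃ R > (0:ℝ), ball I₀ R ⊆ U ∧ ∃ c > (0:ℝ), ∀ I ∈ ball I₀ R, ∀ w : E, ‖w‖ = 1 →
      c ≤ ∑ k ∈ Finset.Icc 1 (s+1), |iteratedFDeriv ℝ k h I (fun _ => w)| := by
  set F : E × E → ℝ := fun p => ∑ k ∈ Finset.Icc 1 (s+1),
    |iteratedFDeriv ℝ k h p.1 (fun _ => p.2)| with hF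
  have hcontk : ∀ k : ℕ, k ≤ m → ContinuousOn (iteratedFDeriv ℝ k h) U := by
    intro k hk
    exact (hreg.continuousOn_iteratedFDerivWithin (by exact_mod_cast hk) hU.uniqueDiffOn).congr
      (iteratedFDerivWithin_of_isOpen k hU).symm
  have hFcont : ContinuousOn F (U ×ˢ (univ : Set E)) := by
    apply continuousOn_finset_sum
    intro k hk
    have hkm : k ≤ m := le_trans (Finset.mem_Icc.mp hk).2 hsm
    have h1 : ContinuousOn (fun p : E × E => iteratedFDeriv ℝ k h p.1 (fun _ => p.2))
        (U ×ˢ (univ : Set E)) := by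
      have hpair : ContinuousOn (fun p : E × E =>
          ((iteratedFDeriv ℝ k h p.1), (fun _ : Fin k => p.2))) (U ×ˢ (univ : Set E)) :=
        ((hcontk k hkm).comp continuousOn_fst (fun p hp => hp.1)).prodMk
          ((continuous_pi (fun _ : Fin k => continuous_snd)).continuousOn)
      simpa [Function.comp_def] using continuous_eval.comp_continuousOn hpair
    exact h1.abs
  have hFpos : ∀ w : E, ‖w‖ = 1 → 0 < F (I₀, w) := by
    intro w hw
    obtain ⟨k, hk1, hk2, hkne⟩ := hjet w hw
    have habs : 0 < |iteratedFDeriv ℝ k h I₀ (fun _ => w)| := abs_pos.mpr hkne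
    have : |iteratedFDeriv ℝ k h I₀ (fun _ => w)| ≤ F (I₀, w) :=
      Finset.single_le_sum (f := fun k => |iteratedFDeriv ℝ k h I₀ (fun _ => w)|)
        (fun _ _ => abs_nonneg _) (Finset.mem_Icc.mpr ⟨hk1, hk2⟩)
    linarith
  -- for each unit w, a product neighborhood where F is large
  have hnbhd : ∀ w : E, ∃ ρ : ℝ, w ∈ sphere (0:E) 1 → (0 < ρ ∧
      ∀ I ∈ ball I₀ ρ, ∀ w' ∈ ball w ρ, F (I₀, w) / 2 < F (I, w')) := by
    intro w
    by_cases hw : w ∈ sphere (0:E) 1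
    · have hw1 : ‖w‖ = 1 := by simpa using hw
      have hmem : (U ×ˢ (univ : Set E)) ∈ nhds (I₀, w) :=
        (hU.prod isOpen_univ).mem_nhds ⟨hI₀, trivial⟩
      have hFat : ContinuousAt F (I₀, w) := hFcont.continuousAt hmem
      have hV : {p : E × E | F (I₀, w) / 2 < F p} ∈ nhds (I₀, w) :=
        hFat.preimage_mem_nhds (isOpen_Ioi.mem_nhds (by simp; linarith [hFpos w hw1]))
      rcases Metric.mem_nhds_iff.mp hV with ⟨ρ, hρpos, hρsub⟩
      refine ⟨ρ, fun _ => ⟨hρpos, ?_⟩⟩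
      intro I hI w' hw'
      have : (I, w') ∈ ball (I₀, w) ρ := by
        rw [mem_ball, Prod.dist_eq]
        exact max_lt (by simpa [mem_ball] using hI) (by simpa [mem_ball] using hw')
      exact hρsub this
    · exact ⟨1, fun hw' => absurd hw' hw⟩
  choose ρ hρ using hnbhd
  obtain ⟨T, hTS, hTcov⟩ := (isCompact_sphere (0:E) 1).elim_nhds_subcover
    (fun w => ball w (ρ w))
    (fun w hw => Metric.ball_mem_nhds w (hρ w hw).1)
  have hSne : (sphere (0:E) 1).Nonempty := NormedSpace.sphere_nonempty.mpr zero_le_one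
  have hTne : T.Nonempty := by
    rcases hSne with ⟨w, hw⟩
    rcases Set.mem_iUnion₂.mp (hTcov hw) with ⟨w₀, hw₀T, _⟩
    exact ⟨w₀, hw₀T⟩
  -- choose R small enough
  rcases Metric.isOpen_iff.mp hU I₀ hI₀ with ⟨R₀, hR₀pos, hR₀sub⟩
  set R : ℝ := min (T.inf' hTne ρ) R₀ with hR
  have hRpos : 0 < R := by
    rw [hR]
    apply lt_min _ hR₀pos
    rw [Finset.lt_inf'_iff]
    exact fun w hw => (hρ w (hTS w hw)).1
  set c : ℝ := T.inf' hTne (fun w => F (I₀, w) / 2) with hc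
  have hcpos : 0 < c := by
    rw [hc, Finset.lt_inf'_iff]
    intro w hw
    have hw1 : ‖w‖ = 1 := by simpa using (hTS w hw)
    linarith [hFpos w hw1]
  refine ⟨R, hRpos, le_trans (Metric.ball_subset_ball (min_le_right _ _)) hR₀sub, c, hcpos, ?_⟩
  intro I hI w hw1
  have hwS : w ∈ sphere (0:E) 1 := by simpa using hw1
  rcases Set.mem_iUnion₂.mp (hTcov hwS) with ⟨w₀, hw₀T, hwball⟩
  have h1 : F (I₀, w₀) / 2 < F (I, w) := by
    apply (hρ w₀ (hTS w₀ hw₀T)).2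
    · exact Metric.ball_subset_ball (le_trans (min_le_left _ _) (Finset.inf'_le ρ hw₀T)) hI
    · exact hwball
  have h2 : c ≤ F (I₀, w₀) / 2 := Finset.inf'_le _ hw₀T
  exact le_trans h2 (le_of_lt h1)


lemma hasDerivAt_line {E : Type*} [NormedAddCommGroup E] [NormedSpace ℝ E]
    {h : E → ℝ} {U : Set E} (hU : IsOpen U) {m : ℕ} (hreg : ContDiffOn ℝ m h U)
    {k : ℕ} (hk : k + 1 ≤ m) {I w : E} {t : ℝ} (ht : I + t • w ∈ U) :
    HasDerivAt (fun t : ℝ => iteratedFDeriv ℝ k h (I + t • w) (fun _ => w))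
      (iteratedFDeriv ℝ (k+1) h (I + t • w) (fun _ => w)) t := by
  set x := I + t • w with hx
  have hdiffOn : DifferentiableOn ℝ (iteratedFDerivWithin ℝ k h U) U :=
    hreg.differentiableOn_iteratedFDerivWithin
      (by exact_mod_cast lt_of_lt_of_le (Nat.lt_succ_self k) hk) hU.uniqueDiffOn
  have heq : iteratedFDerivWithin ℝ k h U =ᶠ[nhds x] iteratedFDeriv ℝ k h :=
    Filter.eventuallyEq_of_mem (hU.mem_nhds ht) (iteratedFDerivWithin_of_isOpen k hU)
  have hdAt : DifferentiableAt ℝ (iteratedFDeriv ℝ k h) x :=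
    heq.differentiableAt_iff.mp ((hdiffOn x ht).differentiableAt (hU.mem_nhds ht))
  have happ : HasFDerivAt (fun y => iteratedFDeriv ℝ k h y (fun _ : Fin k => w))
      ((fderiv ℝ (iteratedFDeriv ℝ k h) x).flipMultilinear (fun _ : Fin k => w)) x :=
    hdAt.hasFDerivAt.continuousMultilinear_apply_const _
  have hline : HasDerivAt (fun t : ℝ => I + t • w) w t := by
    simpa using ((hasDerivAt_id t).smul_const w).const_add I
  have hcomp := happ.comp_hasDerivAt t hline
  rw [iteratedFDeriv_succ_apply_left]
  exact hcomp

lemma taylor_line_est {E : Type*} [NormedAddCommGroup E] [NormedSpace ℝ E]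
    {h : E → ℝ} {U : Set E} (hU : IsOpen U) {m : ℕ} (hreg : ContDiffOn ℝ m h U)
    {s : ℕ} (hsm : s + 2 ≤ m) {M : ℝ}
    (hM : ∀ x ∈ U, ‖iteratedFDeriv ℝ (s+2) h x‖ ≤ M)
    {I w : E} (hw : ‖w‖ = 1) {ξ η : ℝ} (hη : η ∈ Set.Icc 0 ξ) (hξ : 0 < ξ)
    (hseg : ∀ t ∈ Set.Icc (0:ℝ) ξ, I + t • w ∈ U) :
    |fderiv ℝ h (I + η • w) w - ∑ j ∈ Finset.range (s+1),
        ((j.factorial : ℝ)⁻¹ * iteratedFDeriv ℝ (j+1) h I (fun _ => w) * η ^ j)|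
      ≤ M * ξ ^ (s+1) / s.factorial := by
  classical
  set g : ℕ → ℝ → ℝ := fun k t => iteratedFDeriv ℝ k h (I + t • w) (fun _ => w) with hg
  have hder : ∀ k : ℕ, k + 1 ≤ m → ∀ t ∈ Set.Icc (0:ℝ) ξ,
      HasDerivAt (g k) (g (k+1) t) t :=
    fun k hk t ht => hasDerivAt_line hU hreg hk (hseg t ht)
  have hUD : UniqueDiffOn ℝ (Set.Icc (0:ℝ) ξ) := uniqueDiffOn_Icc hξ
  -- identification of iterated derivatives
  have hiter : ∀ j : ℕ, j ≤ s + 1 →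
      Set.EqOn (iteratedDerivWithin j (g 1) (Set.Icc 0 ξ)) (g (j+1)) (Set.Icc 0 ξ) := by
    intro j
    induction j with
    | zero => intro _ t ht; simp [iteratedDerivWithin_zero]
    | succ i IH =>
      intro hi t ht
      have hi' : i ≤ s + 1 := le_trans (Nat.le_succ i) hi
      rw [iteratedDerivWithin_succ]
      rw [derivWithin_congr (IH hi') (IH hi' ht)]
      have hDA : HasDerivAt (g (i+1)) (g (i+2) t) t := by
        apply hder (i+1) _ t ht
        omega
      rw [(hDA.hasDerivWithinAt).derivWithin (hUD t ht)]
  -- continuity of each g k on Icc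
  have hcg : ∀ k : ℕ, k ≤ m → ContinuousOn (g k) (Set.Icc (0:ℝ) ξ) := by
    intro k hk
    have h1 : ContinuousOn (iteratedFDeriv ℝ k h) U :=
      (hreg.continuousOn_iteratedFDerivWithin (by exact_mod_cast hk) hU.uniqueDiffOn).congr
        (iteratedFDerivWithin_of_isOpen k hU).symm
    have hlinec : Continuous (fun t : ℝ => I + t • w) := by continuity
    have h2 : ContinuousOn (fun t : ℝ => iteratedFDeriv ℝ k h (I + t • w))
        (Set.Icc (0:ℝ) ξ) := h1.comp hlinec.continuousOn hseg
    have hpair : ContinuousOn (fun t : ℝ =>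
        ((iteratedFDeriv ℝ k h (I + t • w)), (fun _ : Fin k => w))) (Set.Icc (0:ℝ) ξ) :=
      h2.prodMk continuousOn_const
    simpa [hg, Function.comp_def] using continuous_eval.comp_continuousOn hpair
  -- C^{s+1} smoothness of g 1 on Icc
  have hcd : ContDiffOn ℝ (s+1 : ℕ) (g 1) (Set.Icc (0:ℝ) ξ) := by
    apply contDiffOn_of_continuousOn_differentiableOn_deriv
    · intro j hj
      have hj' : j ≤ s + 1 := by exact_mod_cast hj
      exact ((hcg (j+1) (by omega)).congr (hiter j hj'))
    · intro j hj
      have hj' : j ≤ s := by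
        have : (j : ℕ∞) < (s+1 : ℕ) := hj
        exact_mod_cast Nat.lt_succ_iff.mp (by exact_mod_cast this)
      apply DifferentiableOn.congr _ (hiter j (by omega))
      intro t ht
      exact ((hder (j+1) (by omega) t ht).differentiableAt).differentiableWithinAt
  -- bound on the (s+1)-st derivative
  have hbd : ∀ y ∈ Set.Icc (0:ℝ) ξ,
      ‖iteratedDerivWithin (s+1) (g 1) (Set.Icc (0:ℝ) ξ) y‖ ≤ M := by
    intro y hy
    rw [hiter (s+1) le_rfl hy]
    have h1 : ‖iteratedFDeriv ℝ (s+2) h (I + y • w) (fun _ => w)‖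
        ≤ ‖iteratedFDeriv ℝ (s+2) h (I + y • w)‖ * ∏ _i : Fin (s+2), ‖w‖ :=
      (iteratedFDeriv ℝ (s+2) h (I + y • w)).le_opNorm _
    rw [hw] at h1
    simp only [Finset.prod_const, one_pow, mul_one] at h1
    exact le_trans h1 (hM _ (hseg y hy))
  -- Taylor's theorem
  have htay := taylor_mean_remainder_bound (f := g 1) (a := 0) (b := ξ) (n := s)
    hξ.le (by exact_mod_cast hcd) hη hbd
  -- rewrite the Taylor polynomial
  rw [taylor_within_apply] at htay
  have hsum : ∑ j ∈ Finset.range (s+1), (((j.factorial : ℝ)⁻¹ * (η - 0) ^ j)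
        • iteratedDerivWithin j (g 1) (Set.Icc 0 ξ) 0)
      = ∑ j ∈ Finset.range (s+1),
        ((j.factorial : ℝ)⁻¹ * iteratedFDeriv ℝ (j+1) h I (fun _ => w) * η ^ j) := by
    apply Finset.sum_congr rfl
    intro j hj
    have hj' : j ≤ s + 1 := by
      have := Finset.mem_range.mp hj; omega
    rw [hiter j hj' (by constructor <;> [rfl; exact hξ.le] : (0:ℝ) ∈ Set.Icc (0:ℝ) ξ)]
    simp [hg, smul_eq_mul]
    ring
  rw [hsum] at htay
  have hfst : g 1 η = fderiv ℝ h (I + η • w) w := by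
    simp [hg, iteratedFDeriv_one_apply]
  rw [hfst] at htay
  calc |fderiv ℝ h (I + η • w) w - ∑ j ∈ Finset.range (s+1),
        ((j.factorial : ℝ)⁻¹ * iteratedFDeriv ℝ (j+1) h I (fun _ => w) * η ^ j)|
      ≤ M * (η - 0) ^ (s+1) / s.factorial := htay
    _ ≤ M * ξ ^ (s+1) / s.factorial := by
        have hM0 : 0 ≤ M := le_trans (norm_nonneg _) (hM _ (hseg 0 ⟨le_rfl, hξ.le⟩))
        have : (η - 0) ^ (s+1) ≤ ξ ^ (s+1) := by
          rw [sub_zero]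
          exact pow_le_pow_left₀ hη.1 hη.2 _
        apply div_le_div_of_nonneg_right _ (by positivity)
        · exact mul_le_mul_of_nonneg_left this hM0

set_option maxHeartbeats 2000000 in
/-- Theorem B, part (i): explicit criterion for steepness on one-dimensional subspaces. -/
theorem statement4 (r n : ℕ) (hr : 2 ≤ r) (hn : 2 ≤ n) (s₁ : ℕ)
    (hs : 1 ≤ s₁ ∧ s₁ ≤ r - 1)
    (I₀ : EuclideanSpace ℝ (Fin n)) (ϱ : ℝ) (hϱ : 0 < ϱ)
    (h : EuclideanSpace ℝ (Fin n) → ℝ)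
    (hreg : ContDiffOn ℝ (2*r-1 : ℕ) h (closedBall I₀ ϱ))
    (hbound : ∃ M : ℝ, CqNormLe (2*r-1) h (closedBall I₀ ϱ) M)
    (hgrad : gradient h I₀ ≠ 0)
    (hjet : ¬ ∃ w : EuclideanSpace ℝ (Fin n), ‖w‖ = 1 ∧
      ∀ k, 1 ≤ k → k ≤ s₁ + 1 → iteratedFDeriv ℝ k h I₀ (fun _ => w) = 0) :
    ∃ R > (0:ℝ), ∃ C₁ > (0:ℝ), ∃ δ > (0:ℝ),
      (∀ I ∈ ball I₀ R, gradient h I ≠ 0) ∧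
      (∀ I ∈ ball I₀ R, ∀ Γ : Submodule ℝ (EuclideanSpace ℝ (Fin n)),
        Module.finrank ℝ Γ = 1 → (∀ u ∈ Γ, ⟪u, gradient h I⟫ = 0) →
        SteepAt h I Γ C₁ δ (s₁ : ℝ)) := by
  classical
  obtain ⟨hs1, hs2⟩ := hs
  haveI : Nonempty (Fin n) := ⟨⟨0, by omega⟩⟩
  set U : Set (EuclideanSpace ℝ (Fin n)) := ball I₀ ϱ with hUdef
  have hUopen : IsOpen U := isOpen_ball
  have hI₀U : I₀ ∈ U := mem_ball_self hϱ
  set m : ℕ := 2*r-1 with hm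
  have hregU : ContDiffOn ℝ m h U := hreg.mono ball_subset_closedBall
  obtain ⟨M, hMle⟩ := hbound
  have hMU : ∀ k, k ≤ m → ∀ x ∈ U, ‖iteratedFDeriv ℝ k h x‖ ≤ M := by
    intro k hk x hx
    have h2 := iteratedFDerivWithin_inter_open (𝕜 := ℝ) (f := h) (n := k)
      (s := closedBall I₀ ϱ) isOpen_ball hx
    rw [Set.inter_eq_self_of_subset_right ball_subset_closedBall] at h2
    have h1 : iteratedFDerivWithin ℝ k h (closedBall I₀ ϱ) x = iteratedFDeriv ℝ k h x :=
      h2.symm.trans (iteratedFDerivWithin_of_isOpen k isOpen_ball hx)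
    rw [← h1]
    exact hMle k hk x (ball_subset_closedBall hx)
  have hM0 : 0 ≤ M :=
    le_trans (norm_nonneg _) (hMle 0 (Nat.zero_le _) I₀ (mem_closedBall_self hϱ.le))
  have hs₁m : s₁ + 2 ≤ m := by omega
  have hjet' : ∀ w : (EuclideanSpace ℝ (Fin n)), ‖w‖ = 1 → ∃ k, 1 ≤ k ∧ k ≤ s₁ + 1 ∧
      iteratedFDeriv ℝ k h I₀ (fun _ => w) ≠ 0 := by
    intro w hw
    have hne : ¬ ∀ k, 1 ≤ k → k ≤ s₁ + 1 → iteratedFDeriv ℝ k h I₀ (fun _ => w) = 0 :=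
      fun hall => hjet ⟨w, hw, hall⟩
    push_neg at hne
    exact hne
  obtain ⟨R₀, hR₀pos, hR₀sub, c, hcpos, hlow⟩ :=
    jet_lower_bound hUopen hI₀U hregU (by omega : s₁ + 1 ≤ m) hjet'
  -- gradient nonvanishing radius
  have hfderivC : ContinuousOn (fderiv ℝ h) U :=
    hregU.continuousOn_fderiv_of_isOpen hUopen (by exact_mod_cast (by omega : 1 ≤ m))
  have hfd0 : fderiv ℝ h I₀ ≠ 0 := by
    intro h0
    apply hgrad
    show (InnerProductSpace.toDual ℝ (EuclideanSpace ℝ (Fin n))).symm (fderiv ℝ h I₀) = 0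
    rw [h0, map_zero]
  obtain ⟨R₁, hR₁pos, hR₁sub⟩ := Metric.mem_nhds_iff.mp
    ((hfderivC.continuousAt (hUopen.mem_nhds hI₀U)).preimage_mem_nhds
      (isOpen_ne.mem_nhds hfd0))
  obtain ⟨κ, hκpos, hκ⟩ := exists_poly_kappa s₁
  set c₂ : ℝ := c / ((s₁+1) * s₁.factorial) with hc₂
  have hc₂pos : 0 < c₂ := by
    apply div_pos hcpos
    positivity
  set C₁ : ℝ := κ * c₂ / 4 with hC₁
  have hC₁pos : 0 < C₁ := by positivity
  set δ : ℝ := min 1 (min (ϱ/2) (κ * c₂ * s₁.factorial / (2 * (M+1)))) with hδ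
  have hδpos : 0 < δ := by
    apply lt_min one_pos (lt_min (by linarith) _)
    positivity
  set R : ℝ := min R₀ (min R₁ (ϱ/4)) with hRdef
  have hRpos : 0 < R := lt_min hR₀pos (lt_min hR₁pos (by linarith))
  refine ⟨R, hRpos, C₁, hC₁pos, δ, hδpos, ?_, ?_⟩
  · -- gradient nonzero on the ball
    intro I hI h0
    have hIb : I ∈ ball I₀ R₁ :=
      ball_subset_ball (le_trans (min_le_right _ _) (min_le_left _ _)) hI
    have hne : fderiv ℝ h I ≠ 0 := hR₁sub hIb
    apply hne
    have h2 : (InnerProductSpace.toDual ℝ (EuclideanSpace ℝ (Fin n))) (gradient h I) = fderiv ℝ h I :=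
      (InnerProductSpace.toDual ℝ (EuclideanSpace ℝ (Fin n))).apply_symm_apply (fderiv ℝ h I)
    rw [h0, map_zero] at h2
    exact h2.symm
  · -- steepness
    intro I hI Γ hrank _horth
    obtain ⟨v, hv0, hvgen⟩ := finrank_eq_one_iff'.mp hrank
    have hv0' : (v : (EuclideanSpace ℝ (Fin n))) ≠ 0 := fun h0 => hv0 (Submodule.coe_eq_zero.mp h0)
    set w : (EuclideanSpace ℝ (Fin n)) := ‖(v:(EuclideanSpace ℝ (Fin n)))‖⁻¹ • (v:(EuclideanSpace ℝ (Fin n))) with hwdef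
    have hvnz : ‖(v:(EuclideanSpace ℝ (Fin n)))‖ ≠ 0 := norm_ne_zero_iff.mpr hv0'
    have hwnorm : ‖w‖ = 1 := by
      rw [hwdef, norm_smul, norm_inv, norm_norm, inv_mul_cancel₀ hvnz]
    have hwΓ : w ∈ Γ := Γ.smul_mem _ v.2
    have hΓw : ∀ u : (EuclideanSpace ℝ (Fin n)), u ∈ Γ → ∃ a : ℝ, u = a • w := by
      intro u hu
      obtain ⟨a, ha⟩ := hvgen ⟨u, hu⟩
      have hcoe : a • (v : (EuclideanSpace ℝ (Fin n))) = u := congrArg Subtype.val ha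
      refine ⟨a * ‖(v:(EuclideanSpace ℝ (Fin n)))‖, ?_⟩
      rw [mul_smul, hwdef, smul_inv_smul₀ hvnz, hcoe]
    -- the steepness inequality
    intro ξ hξmem
    obtain ⟨hξ0, hξδ⟩ := hξmem
    have hξ1 : ξ ≤ 1 := le_trans hξδ (min_le_left _ _)
    have hξϱ : ξ ≤ ϱ/2 := le_trans hξδ (le_trans (min_le_right _ _) (min_le_left _ _))
    have hξM : ξ ≤ κ * c₂ * s₁.factorial / (2 * (M+1)) :=
      le_trans hξδ (le_trans (min_le_right _ _) (min_le_right _ _))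
    -- segment condition, for any unit vector
    have hseg : ∀ v' : (EuclideanSpace ℝ (Fin n)), ‖v'‖ = 1 → ∀ t ∈ Set.Icc (0:ℝ) ξ, I + t • v' ∈ U := by
      intro v' hv' t ht
      rw [hUdef, mem_ball]
      have hIR : dist I I₀ < R := mem_ball.mp hI
      have hRϱ : R ≤ ϱ/4 := le_trans (min_le_right _ _) (min_le_right _ _)
      calc dist (I + t • v') I₀ ≤ dist (I + t • v') I + dist I I₀ := dist_triangle _ _ _
        _ = ‖t • v'‖ + dist I I₀ := by rw [dist_eq_norm, add_sub_cancel_left]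
        _ ≤ t + dist I I₀ := by
            rw [norm_smul, hv', mul_one, Real.norm_eq_abs, abs_of_nonneg ht.1]
        _ < ξ + R := by
            have := ht.2; linarith
        _ ≤ ϱ/2 + ϱ/4 := by linarith
        _ < ϱ := by linarith
    -- the coefficient vector
    set b : Fin (s₁+1) → ℝ := fun j =>
      (j.1.factorial : ℝ)⁻¹ * iteratedFDeriv ℝ (j.1+1) h I (fun _ => w) * ξ ^ j.1 with hb
    have hIball : I ∈ ball I₀ R₀ := ball_subset_ball (min_le_left _ _) hI
    have hsum := hlow I hIball w hwnorm
    have hone : ∃ k ∈ Finset.Icc 1 (s₁+1),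
        c / (s₁+1) ≤ |iteratedFDeriv ℝ k h I (fun _ => w)| := by
      apply Finset.exists_le_of_sum_le ⟨1, Finset.mem_Icc.mpr ⟨le_rfl, by omega⟩⟩
      calc ∑ _k ∈ Finset.Icc 1 (s₁+1), c / (s₁+1)
          = (s₁+1 : ℕ) • (c / (s₁+1)) := by rw [Finset.sum_const, Nat.card_Icc]; norm_num
        _ = c := by
            rw [nsmul_eq_mul]
            field_simp
            push_cast; ring
      exact hsum
    obtain ⟨k, hkmem, hk⟩ := hone
    obtain ⟨hk1, hk2⟩ := Finset.mem_Icc.mp hkmem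
    set j : Fin (s₁+1) := ⟨k-1, by omega⟩ with hj
    have hjk : j.1 + 1 = k := by simp only [hj]; omega
    have hbj : c₂ * ξ ^ s₁ ≤ |b j| := by
      rw [hb]
      simp only [abs_mul, abs_pow, abs_of_pos hξ0, abs_inv, Nat.abs_cast]
      rw [hjk]
      have hfac : (j.1.factorial : ℝ)⁻¹ ≥ (s₁.factorial : ℝ)⁻¹ := by
        apply inv_anti₀
        · exact_mod_cast Nat.factorial_pos _
        · exact_mod_cast Nat.factorial_le (by omega : j.1 ≤ s₁)
      have hpow : ξ ^ j.1 ≥ ξ ^ s₁ := pow_le_pow_of_le_one hξ0.le hξ1 (by omega : j.1 ≤ s₁)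
      calc c₂ * ξ ^ s₁ = (c / (s₁+1)) * (s₁.factorial : ℝ)⁻¹ * ξ ^ s₁ := by
            rw [hc₂]; field_simp
        _ ≤ |iteratedFDeriv ℝ k h I (fun _ => w)| * (j.1.factorial : ℝ)⁻¹ * ξ ^ j.1 := by
            apply mul_le_mul
            · apply mul_le_mul hk hfac (by positivity) (abs_nonneg _)
            · exact hpow
            · positivity
            · positivity
        _ = (j.1.factorial : ℝ)⁻¹ * |iteratedFDeriv ℝ k h I (fun _ => w)| * ξ ^ j.1 := by ring
    have hbnorm : c₂ * ξ ^ s₁ ≤ ‖b‖ := le_trans hbj (norm_le_pi_norm b j)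
    obtain ⟨t, htIcc, hP1, hP2⟩ := hκ b
    refine ⟨t * ξ, ⟨mul_nonneg htIcc.1 hξ0.le, ?_⟩, ?_⟩
    · calc t * ξ ≤ 1 * ξ := mul_le_mul_of_nonneg_right htIcc.2 hξ0.le
        _ = ξ := one_mul ξ
    intro u huΓ hunorm
    obtain ⟨a, rfl⟩ := hΓw u huΓ
    have haabs : |a| = t * ξ := by
      rw [norm_smul, hwnorm, mul_one, Real.norm_eq_abs] at hunorm
      exact hunorm
    -- key estimate for a unit direction v' with the two polynomial values
    set η : ℝ := t * ξ with hη
    have hη0 : 0 ≤ η := mul_nonneg htIcc.1 hξ0.le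
    have hηξ : η ≤ ξ := by
      calc η ≤ 1 * ξ := mul_le_mul_of_nonneg_right htIcc.2 hξ0.le
        _ = ξ := one_mul ξ
    have hrem : M * ξ ^ (s₁+1) / s₁.factorial ≤ (κ * c₂ / 2) * ξ ^ s₁ := by
      have h1 : M * ξ ^ (s₁+1) / s₁.factorial = (M * ξ / s₁.factorial) * ξ ^ s₁ := by
        rw [pow_succ]; ring
      rw [h1]
      have hfacpos : (0:ℝ) < (s₁.factorial : ℝ) := by exact_mod_cast Nat.factorial_pos s₁
      have h3 : M * ξ / s₁.factorial ≤ κ * c₂ / 2 := by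
        rw [div_le_iff₀ hfacpos]
        have h2 : M * ξ ≤ (M+1) * ξ :=
          mul_le_mul_of_nonneg_right (le_add_of_nonneg_right zero_le_one) hξ0.le
        calc M * ξ ≤ (M+1) * ξ := h2
          _ ≤ (M+1) * (κ * c₂ * s₁.factorial / (2 * (M+1))) := by
              apply mul_le_mul_of_nonneg_left hξM (by linarith)
          _ = κ * c₂ * s₁.factorial / 2 := by field_simp
          _ = κ * c₂ / 2 * ↑s₁.factorial := by ring
      exact mul_le_mul_of_nonneg_right h3 (by positivity)
    -- Taylor estimates in directions w and -w
    have hMs : ∀ x ∈ U, ‖iteratedFDeriv ℝ (s₁+2) h x‖ ≤ M := fun x hx => hMU (s₁+2) hs₁m x hx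
    set P : EuclideanSpace ℝ (Fin n) → ℝ := fun v' => ∑ jj ∈ Finset.range (s₁+1),
      ((jj.factorial : ℝ)⁻¹ * iteratedFDeriv ℝ (jj+1) h I (fun _ => v') * η ^ jj) with hP
    have hmwnorm : ‖-w‖ = 1 := by rw [norm_neg, hwnorm]
    -- |P w| is large
    have hPw : κ * (c₂ * ξ ^ s₁) ≤ |P w| := by
      have hPeq : P w = ∑ jj : Fin (s₁+1), b jj * t ^ (jj:ℕ) := by
        simp only [hP]
        rw [← Fin.sum_univ_eq_sum_range]
        apply Finset.sum_congr rfl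
        intro jj _
        rw [hb]
        simp only
        rw [hη, mul_pow]
        ring
      rw [hPeq]
      exact le_trans (mul_le_mul_of_nonneg_left hbnorm hκpos.le) hP1
    -- |P (-w)| is large
    have hneg : ∀ jj : ℕ, iteratedFDeriv ℝ jj h I (fun _ => -w)
        = (-1:ℝ)^jj * iteratedFDeriv ℝ jj h I (fun _ => w) := by
      intro jj
      have h1 : (fun _ : Fin jj => -w) = fun _ : Fin jj => (-1:ℝ) • w := by
        funext i; simp
      rw [h1, ContinuousMultilinearMap.map_smul_univ]
      simp [Finset.prod_const]
    have hPmw : κ * (c₂ * ξ ^ s₁) ≤ |P (-w)| := by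
      have hPeq : P (-w) = -∑ jj : Fin (s₁+1), b jj * (-t) ^ (jj:ℕ) := by
        simp only [hP]
        rw [← Fin.sum_univ_eq_sum_range, ← Finset.sum_neg_distrib]
        apply Finset.sum_congr rfl
        intro jj _
        rw [hb]
        simp only
        rw [hη, hneg (jj.1+1), pow_succ (-1:ℝ) jj.1, neg_pow t jj.1, mul_pow t ξ jj.1]
        ring
      rw [hPeq, abs_neg]
      exact le_trans (mul_le_mul_of_nonneg_left hbnorm hκpos.le) hP2
    -- the key lower bound in a unit direction
    have hkey : ∀ v' : EuclideanSpace ℝ (Fin n), ‖v'‖ = 1 →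
        κ * (c₂ * ξ ^ s₁) ≤ |P v'| → C₁ * ξ ^ s₁ < |fderiv ℝ h (I + η • v') v'| := by
      intro v' hv' hPv
      have htay := taylor_line_est hUopen hregU hs₁m hMs hv'
        (⟨hη0, hηξ⟩ : η ∈ Set.Icc 0 ξ) hξ0 (hseg v' hv')
      have h1 : |P v'| - |fderiv ℝ h (I + η • v') v' - P v'|
          ≤ |fderiv ℝ h (I + η • v') v'| := by
        have := abs_sub_abs_le_abs_sub (P v') (fderiv ℝ h (I + η • v') v')
        have h2 : |P v' - fderiv ℝ h (I + η • v') v'|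
            = |fderiv ℝ h (I + η • v') v' - P v'| := abs_sub_comm _ _
        linarith
      have hξpow : 0 < ξ ^ s₁ := pow_pos hξ0 s₁
      have hC₁' : C₁ * ξ ^ s₁ < (κ * c₂ / 2) * ξ ^ s₁ := by
        rw [hC₁]
        apply mul_lt_mul_of_pos_right _ hξpow
        linarith [mul_pos hκpos hc₂pos]
      have : (κ * c₂ / 2) * ξ ^ s₁ ≤ |fderiv ℝ h (I + η • v') v'| := by
        have h3 : κ * (c₂ * ξ ^ s₁) = κ * c₂ * ξ ^ s₁ := by ring
        rw [h3] at hPv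
        have h4 := le_trans htay hrem
        linarith
      linarith
    -- identify the direction
    have hcase : ∃ v' : EuclideanSpace ℝ (Fin n), ‖v'‖ = 1 ∧ a • w = η • v' ∧
        κ * (c₂ * ξ ^ s₁) ≤ |P v'| ∧ (v' = w ∨ v' = -w) := by
      rcases abs_cases a with ⟨ha1, _⟩ | ⟨ha1, _⟩
      · exact ⟨w, hwnorm, by rw [← haabs, ha1], hPw, Or.inl rfl⟩
      · refine ⟨-w, hmwnorm, ?_, hPmw, Or.inr rfl⟩
        rw [smul_neg, ← haabs, ha1, neg_smul, neg_neg]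
    obtain ⟨v', hv'1, hv'2, hv'3, hv'4⟩ := hcase
    have hkey' := hkey v' hv'1 hv'3
    -- relate to the projection
    set x : EuclideanSpace ℝ (Fin n) := gradient h (I + a • w) with hx
    have h6 : ⟪x, w⟫ = fderiv ℝ h (I + a • w) w := by
      rw [hx]
      exact InnerProductSpace.toDual_symm_apply
    have hfeq : |fderiv ℝ h (I + a • w) w| = |fderiv ℝ h (I + η • v') v'| := by
      rw [hv'2]
      rcases hv'4 with h9 | h9
      · rw [h9]
      · rw [h9, show fderiv ℝ h (I + η • (-w)) (-w) = -(fderiv ℝ h (I + η • (-w)) w) from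
          map_neg _ _, abs_neg]
    have hproj := Submodule.starProjection_inner_eq_zero (K := Γ) x w hwΓ
    have h5 : ⟪x, w⟫ = ⟪(Submodule.orthogonalProjectionOnto Γ x : EuclideanSpace ℝ (Fin n)), w⟫ := by
      rw [inner_sub_left] at hproj
      have : ⟪x, w⟫ - ⟪(Submodule.orthogonalProjectionOnto Γ x : EuclideanSpace ℝ (Fin n)), w⟫ = 0 := hproj
      linarith
    have h7 : |⟪(Submodule.orthogonalProjectionOnto Γ x : EuclideanSpace ℝ (Fin n)), w⟫|
        ≤ ‖(Submodule.orthogonalProjectionOnto Γ x : EuclideanSpace ℝ (Fin n))‖ := by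
      calc |⟪(Submodule.orthogonalProjectionOnto Γ x : EuclideanSpace ℝ (Fin n)), w⟫|
          ≤ ‖(Submodule.orthogonalProjectionOnto Γ x : EuclideanSpace ℝ (Fin n))‖ * ‖w‖ :=
            abs_real_inner_le_norm _ _
        _ = ‖(Submodule.orthogonalProjectionOnto Γ x : EuclideanSpace ℝ (Fin n))‖ := by
            rw [hwnorm, mul_one]
    have hfinal : C₁ * ξ ^ s₁ < ‖(Submodule.orthogonalProjectionOnto Γ x : EuclideanSpace ℝ (Fin n))‖ := by
      have h8 : |⟪x, w⟫| = |fderiv ℝ h (I + a • w) w| := by rw [h6]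
      rw [h5] at h8
      rw [hfeq] at h8
      linarith [hkey', h8 ▸ h7]
    have hrpow : ξ ^ ((s₁:ℕ) : ℝ) = ξ ^ (s₁:ℕ) := Real.rpow_natCast ξ s₁
    rw [hrpow]
    exact hfinal

end
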